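/- Let n be a positive integer with 2^(2^n) + 1 prime. The system in positive integer unknowns x₁, …, x_{n+5} given by: xᵢ · xᵢ = x_{i+1} for i ∈ {1, …, n}, x₁ + 1 = x_{n+2}, x_{n+2} + 1 = x_{n+3}, x_{n+1} + 1 = x_{n+4}, and x_{n+3} · x_{n+5} = x_{n+4}, has a unique solution in positive integers, and in that solution x_{n+4} = (2^(2^n) − 1)^(2^n) + 1 is the maximum of all the unknowns. -/

import Mathlib

set_option maxHeartbeats 1000000


/-- The system of Theorem 3 in `n + 5` positive-integer unknowns (0-indexed):
`xᵢ · xᵢ = x_{i+1}` for `i ∈ {1,…,n}` (0-indexed `0,…,n-1`), `x₁ + 1 = x_{n+2}`,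
`x_{n+2} + 1 = x_{n+3}`, `x_{n+1} + 1 = x_{n+4}`, `x_{n+3} · x_{n+5} = x_{n+4}`. -/
def FermatSystem (n : ℕ) (x : Fin (n + 5) → ℕ) : Prop :=
  (∀ i, 0 < x i) ∧
  (∀ i : ℕ, (hi : i < n) → x ⟨i, by omega⟩ * x ⟨i, by omega⟩ = x ⟨i + 1, by omega⟩) ∧
  x ⟨0, by omega⟩ + 1 = x ⟨n + 1, by omega⟩ ∧
  x ⟨n + 1, by omega⟩ + 1 = x ⟨n + 2, by omega⟩ ∧
  x ⟨n, by omega⟩ + 1 = x ⟨n + 3, by omega⟩ ∧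
  x ⟨n + 2, by omega⟩ * x ⟨n + 4, by omega⟩ = x ⟨n + 3, by omega⟩

private lemma fs_dvd_iff (n a : ℕ) (hn : 0 < n) :
    (a + 2) ∣ a ^ 2 ^ n + 1 ↔ (a + 2) ∣ 2 ^ 2 ^ n + 1 := by
  have heven : Even (2 ^ n) := (Nat.even_pow).2 ⟨even_two, hn.ne'⟩
  have hmod : (a : ℤ) ≡ (-2) [ZMOD (a + 2)] := by
    apply Int.ModEq.symm
    rw [Int.modEq_iff_dvd]
    exact ⟨1, by ring⟩
  have hpow : (a : ℤ) ^ 2 ^ n + 1 ≡ 2 ^ 2 ^ n + 1 [ZMOD (a + 2)] := by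
    have := (hmod.pow (2 ^ n)).add_right 1
    rwa [heven.neg_pow] at this
  constructor
  · intro h
    have h' : ((a : ℤ) + 2) ∣ (a : ℤ) ^ 2 ^ n + 1 := by exact_mod_cast h
    have d := Int.ModEq.dvd hpow
    have h2 : ((a : ℤ) + 2) ∣ (2 : ℤ) ^ 2 ^ n + 1 := by
      have := dvd_add d h'
      rwa [sub_add_cancel] at this
    exact_mod_cast h2
  · intro h
    have h' : ((a : ℤ) + 2) ∣ (2 : ℤ) ^ 2 ^ n + 1 := by exact_mod_cast h
    have d := Int.ModEq.dvd hpow.symm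
    have h2 : ((a : ℤ) + 2) ∣ (a : ℤ) ^ 2 ^ n + 1 := by
      have := dvd_add d h'
      rwa [sub_add_cancel] at this
    exact_mod_cast h2

/-- The explicit solution. -/
private def fsSol (n : ℕ) : Fin (n + 5) → ℕ := fun i =>
  if (i : ℕ) ≤ n then (2 ^ 2 ^ n - 1) ^ 2 ^ (i : ℕ)
  else if (i : ℕ) = n + 1 then 2 ^ 2 ^ n
  else if (i : ℕ) = n + 2 then 2 ^ 2 ^ n + 1
  else if (i : ℕ) = n + 3 then (2 ^ 2 ^ n - 1) ^ 2 ^ n + 1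
  else ((2 ^ 2 ^ n - 1) ^ 2 ^ n + 1) / (2 ^ 2 ^ n + 1)

private lemma fsSol_val_le (n i : ℕ) (hi : i ≤ n) (h5 : i < n + 5) :
    fsSol n ⟨i, h5⟩ = (2 ^ 2 ^ n - 1) ^ 2 ^ i := by
  simp only [fsSol]
  rw [if_pos hi]

private lemma fsSol_val_n1 (n : ℕ) (h5 : n + 1 < n + 5) :
    fsSol n ⟨n + 1, h5⟩ = 2 ^ 2 ^ n := by
  simp only [fsSol]
  rw [if_neg (by omega)]
  simp

private lemma fsSol_val_n2 (n : ℕ) (h5 : n + 2 < n + 5) :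
    fsSol n ⟨n + 2, h5⟩ = 2 ^ 2 ^ n + 1 := by
  simp only [fsSol]
  rw [if_neg (by omega), if_neg (by omega)]
  simp

private lemma fsSol_val_n3 (n : ℕ) (h5 : n + 3 < n + 5) :
    fsSol n ⟨n + 3, h5⟩ = (2 ^ 2 ^ n - 1) ^ 2 ^ n + 1 := by
  simp only [fsSol]
  rw [if_neg (by omega), if_neg (by omega), if_neg (by omega)]
  simp

private lemma fsSol_val_n4 (n : ℕ) (h5 : n + 4 < n + 5) :
    fsSol n ⟨n + 4, h5⟩ = ((2 ^ 2 ^ n - 1) ^ 2 ^ n + 1) / (2 ^ 2 ^ n + 1) := by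
  simp only [fsSol]
  rw [if_neg (by omega), if_neg (by omega), if_neg (by omega), if_neg (by omega)]

private lemma fs_pow_eq (n : ℕ) (x : Fin (n + 5) → ℕ) (hx : FermatSystem n x) :
    ∀ i, ∀ _ : i ≤ n, x ⟨i, by omega⟩ = x ⟨0, by omega⟩ ^ 2 ^ i := by
  intro i
  induction i with
  | zero => simp
  | succ k ih =>
    intro hk
    have h1 := hx.2.1 k (by omega)
    rw [← h1, ih (by omega), ← pow_add]
    congr 1
    show 2 ^ k + 2 ^ k = 2 ^ (k + 1)
    ring

private lemma fs_two_le (n : ℕ) (hn : 0 < n) : 4 ≤ 2 ^ 2 ^ n := by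
  calc (4 : ℕ) = 2 ^ 2 := by norm_num
  _ ≤ 2 ^ 2 ^ n := Nat.pow_le_pow_right (by norm_num)
      (le_trans (by norm_num) (Nat.pow_le_pow_right (by norm_num) hn))

private lemma fsSol_eq (n : ℕ) (hn : 0 < n) (hp : Nat.Prime (2 ^ 2 ^ n + 1))
    (x : Fin (n + 5) → ℕ) (hx : FermatSystem n x) : x = fsSol n := by
  obtain ⟨hpos, hsq, h1, h2, h3, h4⟩ := hx
  set a : ℕ := x ⟨0, by omega⟩ with ha
  have hxn : x ⟨n, by omega⟩ = a ^ 2 ^ n := fs_pow_eq n x ⟨hpos, hsq, h1, h2, h3, h4⟩ n le_rfl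
  have hx2 : x ⟨n + 2, by omega⟩ = a + 2 := by omega
  have hdvd : (a + 2) ∣ a ^ 2 ^ n + 1 := by
    refine ⟨x ⟨n + 4, by omega⟩, ?_⟩
    rw [← hx2]
    omega
  have hdvd2 : (a + 2) ∣ 2 ^ 2 ^ n + 1 := (fs_dvd_iff n a hn).1 hdvd
  have heq : a + 2 = 2 ^ 2 ^ n + 1 := by
    rcases (Nat.Prime.eq_one_or_self_of_dvd hp _ hdvd2) with h | h
    · omega
    · exact h
  have ht4 : 4 ≤ 2 ^ 2 ^ n := fs_two_le n hn
  have haval : a = 2 ^ 2 ^ n - 1 := by omega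
  funext i
  have h5 : (i : ℕ) < n + 5 := i.isLt
  have hcase : (i : ℕ) ≤ n ∨ (i : ℕ) = n + 1 ∨ (i : ℕ) = n + 2 ∨ (i : ℕ) = n + 3 ∨
      (i : ℕ) = n + 4 := by omega
  rcases hcase with hi | hi | hi | hi | hi
  · have hie : i = (⟨(i : ℕ), h5⟩ : Fin (n + 5)) := by apply Fin.ext; rfl
    rw [hie, fs_pow_eq n x ⟨hpos, hsq, h1, h2, h3, h4⟩ (i : ℕ) hi, ← ha, haval,
      fsSol_val_le n _ hi h5]
  · have hie : i = (⟨n + 1, by omega⟩ : Fin (n + 5)) := by apply Fin.ext; rw [hi]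
    rw [hie, fsSol_val_n1]
    omega
  · have hie : i = (⟨n + 2, by omega⟩ : Fin (n + 5)) := by apply Fin.ext; rw [hi]
    rw [hie, fsSol_val_n2]
    omega
  · have hie : i = (⟨n + 3, by omega⟩ : Fin (n + 5)) := by apply Fin.ext; rw [hi]
    rw [hie, fsSol_val_n3, ← haval]
    omega
  · have hie : i = (⟨n + 4, by omega⟩ : Fin (n + 5)) := by apply Fin.ext; rw [hi]
    rw [hie, fsSol_val_n4]
    rw [hx2, heq] at h4
    rw [haval] at hxn
    have hm : (2 ^ 2 ^ n - 1) ^ 2 ^ n + 1 = (2 ^ 2 ^ n + 1) * x ⟨n + 4, by omega⟩ := by omega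
    rw [hm, Nat.mul_div_cancel_left _ (by positivity)]

private lemma fsSol_fermat (n : ℕ) (hn : 0 < n) (hp : Nat.Prime (2 ^ 2 ^ n + 1)) :
    FermatSystem n (fsSol n) := by
  have ht4 : 4 ≤ 2 ^ 2 ^ n := fs_two_le n hn
  have hA3 : 3 ≤ 2 ^ 2 ^ n - 1 := by omega
  have hdvd : (2 ^ 2 ^ n + 1) ∣ (2 ^ 2 ^ n - 1) ^ 2 ^ n + 1 := by
    have hsum : (2 ^ 2 ^ n - 1) + 2 = 2 ^ 2 ^ n + 1 := by omega
    rw [← hsum]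
    exact (fs_dvd_iff n (2 ^ 2 ^ n - 1) hn).2 (hsum ▸ dvd_refl _)
  obtain ⟨q, hq⟩ := hdvd
  have hqdiv : ((2 ^ 2 ^ n - 1) ^ 2 ^ n + 1) / (2 ^ 2 ^ n + 1) = q := by
    rw [hq]; exact Nat.mul_div_cancel_left q (by positivity)
  have hqpos : 0 < q := by
    rcases Nat.eq_zero_or_pos q with h | h
    · rw [h, Nat.mul_zero] at hq; omega
    · exact h
  refine ⟨?_, ?_, ?_, ?_, ?_, ?_⟩
  · intro i
    simp only [fsSol]
    split
    · have : 0 < 2 ^ 2 ^ n - 1 := by omega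
      positivity
    split
    · positivity
    split
    · positivity
    split
    · positivity
    · rw [hqdiv]; exact hqpos
  · intro i hi
    rw [fsSol_val_le n i (by omega) (by omega), fsSol_val_le n (i + 1) (by omega) (by omega),
      ← pow_add]
    congr 1
    ring
  · rw [fsSol_val_le n 0 (by omega) (by omega), fsSol_val_n1]
    simp only [pow_zero, pow_one]
    omega
  · rw [fsSol_val_n1, fsSol_val_n2]
  · rw [fsSol_val_le n n le_rfl (by omega), fsSol_val_n3]
  · rw [fsSol_val_n2, fsSol_val_n3, fsSol_val_n4, hqdiv, ← hq]

theorem fermat_system_unique_max (n : ℕ) (hn : 0 < n)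
    (hp : Nat.Prime (2 ^ 2 ^ n + 1)) :
    (∃! x : Fin (n + 5) → ℕ, FermatSystem n x) ∧
    ∀ x : Fin (n + 5) → ℕ, FermatSystem n x →
      x ⟨n + 3, by omega⟩ = (2 ^ 2 ^ n - 1) ^ 2 ^ n + 1 ∧
      ∀ i, x i ≤ x ⟨n + 3, by omega⟩ := by
  have ht4 : 4 ≤ 2 ^ 2 ^ n := fs_two_le n hn
  have hA3 : 3 ≤ 2 ^ 2 ^ n - 1 := by omega
  have hA1 : 2 ^ 2 ^ n = (2 ^ 2 ^ n - 1) + 1 := by omega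
  have hAn : (2 ^ 2 ^ n - 1) ^ 2 ≤ (2 ^ 2 ^ n - 1) ^ 2 ^ n := Nat.pow_le_pow_right (by omega)
    (le_trans (by norm_num) (Nat.pow_le_pow_right (by norm_num) hn))
  have hAsq : (2 ^ 2 ^ n - 1) + 2 ≤ (2 ^ 2 ^ n - 1) ^ 2 := by nlinarith
  constructor
  · exact ⟨fsSol n, fsSol_fermat n hn hp, fun y hy => fsSol_eq n hn hp y hy⟩
  · intro x hx
    rw [fsSol_eq n hn hp x hx, fsSol_val_n3]
    refine ⟨rfl, ?_⟩
    intro i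
    have h5 : (i : ℕ) < n + 5 := i.isLt
    have hcase : (i : ℕ) ≤ n ∨ (i : ℕ) = n + 1 ∨ (i : ℕ) = n + 2 ∨ (i : ℕ) = n + 3 ∨
        (i : ℕ) = n + 4 := by omega
    rcases hcase with hi | hi | hi | hi | hi
    · have hie : i = (⟨(i : ℕ), h5⟩ : Fin (n + 5)) := by apply Fin.ext; rfl
      rw [hie, fsSol_val_le n _ hi h5]
      have : (2 ^ 2 ^ n - 1) ^ 2 ^ (i : ℕ) ≤ (2 ^ 2 ^ n - 1) ^ 2 ^ n :=
        Nat.pow_le_pow_right (by omega) (Nat.pow_le_pow_right (by norm_num) hi)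
      omega
    · have hie : i = (⟨n + 1, by omega⟩ : Fin (n + 5)) := by apply Fin.ext; rw [hi]
      rw [hie, fsSol_val_n1]
      omega
    · have hie : i = (⟨n + 2, by omega⟩ : Fin (n + 5)) := by apply Fin.ext; rw [hi]
      rw [hie, fsSol_val_n2]
      omega
    · have hie : i = (⟨n + 3, by omega⟩ : Fin (n + 5)) := by apply Fin.ext; rw [hi]
      rw [hie, fsSol_val_n3]
    · have hie : i = (⟨n + 4, by omega⟩ : Fin (n + 5)) := by apply Fin.ext; rw [hi]
      rw [hie, fsSol_val_n4]
      exact le_trans (Nat.div_le_self _ _) (by omega)
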